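/- Let n : ℕ, let A : Matrix (Fin n) (Fin n) ℝ be symmetric (Aᵀ = A), let L = 1 − A (the identity matrix minus A), let X : EuclideanSpace ℝ (Fin n), and let b : ℝ with b ≠ 0. Define J : EuclideanSpace ℝ (Fin n) → ℝ by J(Y) = ‖Y − X‖² + b * ⟪Y, L.mulVec Y⟫. Then one step of gradient descent started at Y = X with learning rate c = 1/(2b) yields the hypergraph signal shift: X − (1/(2*b)) • gradient J X = A.mulVec X. -/

import Mathlib

open Matrix

theorem shift_eq_one_step_gradient_descent
    (n : ℕ) (A : Matrix (Fin n) (Fin n) ℝ) (hA : Aᵀ = A)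
    (L : Matrix (Fin n) (Fin n) ℝ) (hL : L = 1 - A)
    (X : EuclideanSpace ℝ (Fin n)) (b : ℝ) (hb : b ≠ 0)
    (J : EuclideanSpace ℝ (Fin n) → ℝ)
    (hJ : J = fun Y : EuclideanSpace ℝ (Fin n) =>
        ‖Y - X‖ ^ 2 +
          b * (inner ℝ Y ((EuclideanSpace.equiv (Fin n) ℝ).symm (L.mulVec Y)) : ℝ)) :
    X - (1 / (2 * b)) • gradient J X
      = (EuclideanSpace.equiv (Fin n) ℝ).symm (A.mulVec X) := by
  classical
  set e := EuclideanSpace.equiv (Fin n) ℝ with he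
  -- T : continuous linear map Y ↦ e.symm (L.mulVec Y)
  set T : EuclideanSpace ℝ (Fin n) →L[ℝ] EuclideanSpace ℝ (Fin n) :=
    (e.symm.toContinuousLinearMap.comp
      ((Matrix.mulVecLin L).toContinuousLinearMap.comp e.toContinuousLinearMap)) with hT
  have hTapp : ∀ Y, T Y = e.symm (L.mulVec Y) := fun Y => rfl
  -- symmetry of L
  have hLsymm : Lᵀ = L := by
    rw [hL, Matrix.transpose_sub, Matrix.transpose_one, hA]
  have hinner_symm : ∀ u v : EuclideanSpace ℝ (Fin n),
      (inner ℝ u (T v) : ℝ) = inner ℝ (T u) v := by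
    intro u v
    simp only [hTapp, PiLp.inner_apply, RCLike.inner_apply, starRingEnd_apply, star_trivial]
    have key : (fun i => u i) ⬝ᵥ L.mulVec (fun i => v i)
        = L.mulVec (fun i => u i) ⬝ᵥ (fun i => v i) := by
      rw [Matrix.dotProduct_mulVec]
      conv_lhs => rw [← hLsymm, Matrix.vecMul_transpose]
    convert key using 1
    · exact Finset.sum_congr rfl fun i _ => mul_comm _ _
    · exact Finset.sum_congr rfl fun i _ => mul_comm _ _
  -- gradient computation
  have hgrad : HasGradientAt J ((2 * b) • T X) X := by
    rw [hasGradientAt_iff_hasFDerivAt]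
    have h1 := ((hasFDerivAt_id X).sub_const X).norm_sq
    have h2 : HasFDerivAt (fun Y : EuclideanSpace ℝ (Fin n) => (inner ℝ Y (T Y) : ℝ))
        ((fderivInnerCLM ℝ (X, T X)).comp
          ((ContinuousLinearMap.id ℝ _).prod T)) X :=
      (hasFDerivAt_id X).inner ℝ (T.hasFDerivAt)
    have h3 := h1.add ((h2.const_mul b))
    have hJeq : J = fun Y : EuclideanSpace ℝ (Fin n) =>
        ‖Y - X‖ ^ 2 + b * (inner ℝ Y (T Y) : ℝ) := by
      rw [hJ]; funext Y; rw [hTapp]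
    rw [hJeq]
    refine h3.congr_fderiv ?_
    ext h
    simp only [ContinuousLinearMap.add_apply, ContinuousLinearMap.coe_smul',
      Pi.smul_apply, ContinuousLinearMap.comp_apply, ContinuousLinearMap.id_apply,
      ContinuousLinearMap.coe_comp', Function.comp_apply, innerSL_apply_apply,
      ContinuousLinearMap.prod_apply, fderivInnerCLM_apply, smul_eq_mul]
    have h4 : (inner ℝ X (T h) : ℝ) = inner ℝ (T X) h := hinner_symm X h
    rw [InnerProductSpace.toDual_apply_apply, inner_smul_left]
    simp only [id_eq, sub_self, inner_zero_left, smul_zero, h4, RCLike.inner_apply,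
      starRingEnd_apply, star_trivial]
    rw [real_inner_comm h (T X)]
    ring
  have hgradeq : gradient J X = (2 * b) • T X := hgrad.gradient
  rw [hgradeq, smul_smul]
  have : 1 / (2 * b) * (2 * b) = 1 := by
    field_simp
  rw [this, one_smul, hTapp]
  ext i
  show X i - (L.mulVec (fun j => X j)) i = (A.mulVec fun j => X j) i
  rw [hL, Matrix.sub_mulVec, Matrix.one_mulVec, Pi.sub_apply, sub_sub_cancel]
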